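/- The map Y = (Y_1,…,Y_n) is an involution: Y(Y(y)) = y for all y_1,…,y_n > 0. -/

import Mathlib

noncomputable section

/-- The convention `y_0 := 1`. -/
def Yc (y : ℕ → ℝ) : ℕ → ℝ := fun k => if k = 0 then 1 else y k

/-- The rational map `Y = (Y_1, …, Y_n)` on positive tuples `(y_1, …, y_n)` (with `y_0 := 1`):
for `1 ≤ i ≤ n−1`,
`Y_i(y) = [Σ_{j=i}^{n} ∏_{k=i}^{j−1} y_k + (∏_{k=i}^{n} y_k)(Σ_{j=0}^{i−2} ∏_{k=0}^{j} y_k)] /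
          [Σ_{j=i+1}^{n−1} ∏_{k=i+1}^{j} y_k + (∏_{k=i+1}^{n} y_k)(Σ_{j=0}^{i} ∏_{k=0}^{j} y_k)]`,
and
`Y_n(y) = [1 + y_n Σ_{j=0}^{n−2} ∏_{k=0}^{j} y_k] / [Σ_{j=1}^{n−1} ∏_{k=1}^{j} y_k + ∏_{k=1}^{n} y_k]`.
These are the paper's formulas for the effect of the mutation sequence `τ` on the
middle-circle `y`-variables of a spider web quiver. -/
def Ymap (n : ℕ) (y : ℕ → ℝ) : ℕ → ℝ := fun i =>
  if i = n then
    (1 + Yc y n * ∑ j ∈ Finset.range (n - 1), ∏ k ∈ Finset.range (j + 1), Yc y k) /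
      (∑ j ∈ Finset.Icc 1 (n - 1), ∏ k ∈ Finset.Icc 1 j, Yc y k +
        ∏ k ∈ Finset.Icc 1 n, Yc y k)
  else
    (∑ j ∈ Finset.Icc i n, ∏ k ∈ Finset.Ico i j, Yc y k +
        (∏ k ∈ Finset.Icc i n, Yc y k) *
          ∑ j ∈ Finset.range (i - 1), ∏ k ∈ Finset.range (j + 1), Yc y k) /
      (∑ j ∈ Finset.Icc (i + 1) (n - 1), ∏ k ∈ Finset.Icc (i + 1) j, Yc y k +
        (∏ k ∈ Finset.Icc (i + 1) n, Yc y k) *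
          ∑ j ∈ Finset.range (i + 1), ∏ k ∈ Finset.range (j + 1), Yc y k)

namespace YInv

open Finset

/-- periodic extension of `y` restricted to `[1,n]` -/
def per (n : ℕ) (y : ℕ → ℝ) : ℕ → ℝ := fun i => if i % n = 0 then y n else y (i % n)

def NN (n : ℕ) (y : ℕ → ℝ) (i : ℕ) : ℝ :=
  ∑ m ∈ range n, ∏ t ∈ range m, per n y (i + t)

def PP (n : ℕ) (y : ℕ → ℝ) : ℝ := ∏ k ∈ Icc 1 n, y k

variable {n : ℕ} {y : ℕ → ℝ}

lemma per_eq (hn : 0 < n) {i : ℕ} (h1 : 1 ≤ i) (h2 : i ≤ n) : per n y i = y i := by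
  unfold per
  rcases eq_or_lt_of_le h2 with rfl | h
  · simp
  · rw [Nat.mod_eq_of_lt h, if_neg (by omega)]

lemma per_add (i : ℕ) : per n y (i + n) = per n y i := by
  unfold per
  rw [Nat.add_mod_right]

lemma per_congr_mod {i j : ℕ} (h : i % n = j % n) : per n y i = per n y j := by
  unfold per; rw [h]

lemma per_pos (hn : 0 < n) (hy : ∀ i, 1 ≤ i → i ≤ n → 0 < y i) (i : ℕ) :
    0 < per n y i := by
  unfold per
  split
  · exact hy n hn le_rfl
  · exact hy _ (by omega) (le_of_lt (Nat.mod_lt _ hn))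

lemma NN_congr_mod {i j : ℕ} (h : i % n = j % n) : NN n y i = NN n y j := by
  unfold NN
  refine sum_congr rfl fun m _ => prod_congr rfl fun t _ => per_congr_mod ?_
  rw [Nat.add_mod i t, Nat.add_mod j t, h]

lemma NN_add (i : ℕ) : NN n y (i + n) = NN n y i :=
  NN_congr_mod (by rw [Nat.add_mod_right])

lemma NN_pos (hn : 0 < n) (hy : ∀ i, 1 ≤ i → i ≤ n → 0 < y i) (i : ℕ) :
    0 < NN n y i := by
  unfold NN
  refine sum_pos (fun m _ => prod_pos fun t _ => per_pos hn hy _) (by simp [hn.ne'])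

/-- the product over any full period equals `PP`. -/
lemma prod_per (hn : 0 < n) (i : ℕ) : ∏ t ∈ range n, per n y (i + t) = PP n y := by
  induction i with
  | zero =>
    obtain ⟨m, rfl⟩ : ∃ m, n = m + 1 := ⟨n - 1, by omega⟩
    rw [Finset.prod_range_succ']
    unfold PP
    rw [← Finset.Ico_add_one_right_eq_Icc, prod_Ico_eq_prod_range,
      show m + 1 + 1 - 1 = m + 1 from by omega, prod_range_succ]
    congr 1
    · refine prod_congr rfl fun t ht => ?_
      simp only [mem_range] at ht
      rw [show (0:ℕ) + (t + 1) = 1 + t from by omega,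
        per_eq (by omega) (by omega) (by omega)]
    · show per (m+1) y 0 = y (1 + m)
      unfold per
      simp [Nat.add_comm 1 m]
  | succ i ih =>
    rw [← ih]
    obtain ⟨m, rfl⟩ : ∃ m, n = m + 1 := ⟨n - 1, by omega⟩
    rw [prod_range_succ, Finset.prod_range_succ' (fun t => per (m+1) y (i + t))]
    rw [show i + 1 + m = i + (m + 1) from by omega, per_add]
    congr 1
    exact prod_congr rfl fun t _ => by rw [show i + 1 + t = i + (t+1) from by omega]
lemma NN_rec (hn : 0 < n) (i : ℕ) :
    NN n y i + PP n y = 1 + per n y i * NN n y (i + 1) := by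
  obtain ⟨m, rfl⟩ : ∃ m, n = m + 1 := ⟨n - 1, by omega⟩
  have key : ∀ k, ∏ t ∈ range (k+1), per (m+1) y (i + t)
      = per (m+1) y i * ∏ t ∈ range k, per (m+1) y (i + 1 + t) := by
    intro k
    rw [Finset.prod_range_succ', mul_comm]
    congr 1
    exact prod_congr rfl fun t _ => by rw [show i + 1 + t = i + (t+1) from by omega]
  have hNN : NN (m+1) y i
      = 1 + per (m+1) y i * ∑ k ∈ range m, ∏ t ∈ range k, per (m+1) y (i + 1 + t) := by
    unfold NN
    rw [Finset.sum_range_succ']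
    simp only [key, prod_range_zero, ← Finset.mul_sum]
    ring
  have hNN1 : NN (m+1) y (i+1)
      = (∑ k ∈ range m, ∏ t ∈ range k, per (m+1) y (i + 1 + t))
        + ∏ t ∈ range m, per (m+1) y (i + 1 + t) := by
    unfold NN; rw [Finset.sum_range_succ]
  have hPP : per (m+1) y i * ∏ t ∈ range m, per (m+1) y (i + 1 + t) = PP (m+1) y := by
    rw [← key, prod_per hn]
  rw [hNN, hNN1, mul_add, hPP]; ring


lemma prod_split (i k : ℕ) : ∏ t ∈ range (k+1), per n y (i + t)
    = per n y i * ∏ t ∈ range k, per n y (i + 1 + t) := by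
  rw [Finset.prod_range_succ', mul_comm]
  congr 1
  exact prod_congr rfl fun t _ => by rw [show i + 1 + t = i + (t+1) from by omega]

lemma YcProd (w : ℕ → ℝ) (j : ℕ) :
    ∏ k ∈ range (j+1), Yc w k = ∏ s ∈ range j, w (s+1) := by
  rw [Finset.prod_range_succ']
  simp [Yc]

lemma Yc_eq (w : ℕ → ℝ) {k : ℕ} (hk : 1 ≤ k) : Yc w k = w k := by
  rw [Yc, if_neg (by omega)]

lemma perTail (hn : 0 < n) {s : ℕ} (hs : s + 1 ≤ n) :
    per n y (n + 1 + s) = y (s + 1) := by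
  rw [show n + 1 + s = (s+1) + n from by omega, per_add, per_eq hn (by omega) hs]

lemma perProd (hn : 0 < n) {i m : ℕ} (h1 : 1 ≤ i) (h : i + m ≤ n + 1) :
    ∏ t ∈ range m, per n y (i + t) = ∏ t ∈ range m, y (i + t) :=
  prod_congr rfl fun t ht => per_eq hn (by omega)
    (by simp only [mem_range] at ht; omega)

lemma sum_Icc_reindex (f : ℕ → ℝ) (a b : ℕ) :
    ∑ j ∈ Icc a b, f j = ∑ m ∈ range (b + 1 - a), f (a + m) := by
  rw [← Finset.Ico_add_one_right_eq_Icc, Finset.sum_Ico_eq_sum_range]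

lemma prod_Icc_reindex (f : ℕ → ℝ) (a b : ℕ) :
    ∏ j ∈ Icc a b, f j = ∏ m ∈ range (b + 1 - a), f (a + m) := by
  rw [← Finset.Ico_add_one_right_eq_Icc, Finset.prod_Ico_eq_prod_range]

lemma formula_n (hn : 2 ≤ n) (w : ℕ → ℝ) :
    Ymap n w n = NN n w n / (NN n w (n+1) + PP n w - 1) := by
  have hn0 : 0 < n := by omega
  have hnum : NN n w n
      = 1 + Yc w n * ∑ j ∈ range (n - 1), ∏ k ∈ range (j + 1), Yc w k := by
    obtain ⟨m, rfl⟩ : ∃ m, n = m + 1 := ⟨n - 1, by omega⟩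
    have h0 : NN (m+1) w (m+1)
        = ∑ j ∈ range m, ∏ t ∈ range (j+1), per (m+1) w (m + 1 + t) + 1 := by
      unfold NN
      rw [Finset.sum_range_succ']
      simp
    rw [h0]
    have hterm : ∀ j ∈ range m, ∏ t ∈ range (j+1), per (m+1) w (m + 1 + t)
        = Yc w (m+1) * ∏ k ∈ range (j+1), Yc w k := by
      intro j hj
      simp only [mem_range] at hj
      rw [prod_split, YcProd]
      rw [per_eq hn0 (by omega) le_rfl, Yc_eq w (by omega)]
      congr 1
      refine prod_congr rfl fun t ht => ?_
      simp only [mem_range] at ht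
      rw [show m + 1 + 1 + t = (m+1) + 1 + t from rfl, perTail hn0 (by omega)]
    rw [Finset.sum_congr rfl hterm, ← Finset.mul_sum]
    rw [show m + 1 - 1 = m from rfl]
    ring
  have hden : NN n w (n+1) + PP n w - 1
      = ∑ j ∈ Icc 1 (n - 1), ∏ k ∈ Icc 1 j, Yc w k + ∏ k ∈ Icc 1 n, Yc w k := by
    have hNN1 : NN n w (n+1) = NN n w 1 := by
      rw [show n + 1 = 1 + n from by omega, NN_add]
    rw [hNN1]
    obtain ⟨m, rfl⟩ : ∃ m, n = m + 1 := ⟨n - 1, by omega⟩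
    have h0 : NN (m+1) w 1
        = ∑ j ∈ range m, ∏ t ∈ range (j+1), per (m+1) w (1 + t) + 1 := by
      unfold NN
      rw [Finset.sum_range_succ']
      simp
    have h1 : ∑ j ∈ Icc 1 (m + 1 - 1), ∏ k ∈ Icc 1 j, Yc w k
        = ∑ j ∈ range m, ∏ t ∈ range (j+1), per (m+1) w (1 + t) := by
      rw [show m + 1 - 1 = m from rfl, sum_Icc_reindex]
      rw [show m + 1 - 1 = m from rfl]
      refine sum_congr rfl fun j hj => ?_
      simp only [mem_range] at hj
      rw [prod_Icc_reindex, show 1 + j + 1 - 1 = j + 1 from by omega]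
      refine prod_congr rfl fun t ht => ?_
      simp only [mem_range] at ht
      rw [Yc_eq w (by omega), per_eq hn0 (by omega) (by omega)]
    have h2 : ∏ k ∈ Icc 1 (m+1), Yc w k = PP (m+1) w :=
      prod_congr rfl fun k hk => by
        simp only [mem_Icc] at hk
        exact Yc_eq w hk.1
    rw [h0, h1, h2]
    ring
  rw [Ymap, if_pos rfl, hnum, hden]

lemma formula_lt (hn : 2 ≤ n) (w : ℕ → ℝ) {i : ℕ} (h1 : 1 ≤ i) (h2 : i < n) :
    Ymap n w i = NN n w i / (NN n w (i+1) + PP n w - 1) := by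
  have hn0 : 0 < n := by omega
  -- the common "tail into second lap" product
  have tail : ∀ a r : ℕ, 1 ≤ a → a ≤ n + 1 → r ≤ n →
      ∏ t ∈ range (n + 1 - a + r), per n w (a + t)
      = (∏ t ∈ range (n + 1 - a), w (a + t)) * ∏ s ∈ range r, w (s + 1) := by
    intro a r ha har hr
    rw [Finset.prod_range_add, perProd hn0 (by omega) (by omega)]
    congr 1
    refine prod_congr rfl fun s hs => ?_
    simp only [mem_range] at hs
    rw [show a + (n + 1 - a + s) = n + 1 + s from by omega, perTail hn0 (by omega)]
  have hIccProd : ∀ a : ℕ, 1 ≤ a →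
      ∏ k ∈ Icc a n, Yc w k = ∏ t ∈ range (n + 1 - a), w (a + t) := by
    intro a ha
    rw [prod_Icc_reindex]
    refine prod_congr rfl fun t ht => ?_
    simp only [mem_range] at ht
    exact Yc_eq w (by omega)
  have hnum : NN n w i
      = ∑ j ∈ Icc i n, ∏ k ∈ Finset.Ico i j, Yc w k +
        (∏ k ∈ Icc i n, Yc w k) *
          ∑ j ∈ range (i - 1), ∏ k ∈ range (j + 1), Yc w k := by
    have e1 : range n = range ((n + 1 - i) + (i - 1)) := by congr 1; omega
    have hsplit : NN n w i
        = (∑ m ∈ range (n + 1 - i), ∏ t ∈ range m, per n w (i + t))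
          + ∑ r ∈ range (i - 1), ∏ t ∈ range (n + 1 - i + r), per n w (i + t) := by
      unfold NN
      rw [e1, Finset.sum_range_add]
    rw [hsplit]
    congr 1
    · rw [sum_Icc_reindex]
      refine sum_congr rfl fun m hm => ?_
      simp only [mem_range] at hm
      rw [Finset.prod_Ico_eq_prod_range, show i + m - i = m from by omega,
        perProd hn0 (by omega) (by omega)]
      exact prod_congr rfl fun t ht => (Yc_eq w (by omega)).symm
    · rw [Finset.mul_sum]
      refine sum_congr rfl fun r hr => ?_
      simp only [mem_range] at hr
      rw [tail i r (by omega) (by omega) (by omega), hIccProd i (by omega), YcProd]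
  have hden : NN n w (i+1) + PP n w - 1
      = ∑ j ∈ Icc (i+1) (n - 1), ∏ k ∈ Icc (i+1) j, Yc w k +
        (∏ k ∈ Icc (i+1) n, Yc w k) *
          ∑ j ∈ range (i + 1), ∏ k ∈ range (j + 1), Yc w k := by
    have e2 : range n = range ((n - i) + i) := by congr 1; omega
    have hsplit : NN n w (i+1)
        = (∑ m ∈ range (n - i), ∏ t ∈ range m, per n w (i + 1 + t))
          + ∑ r ∈ range i, ∏ t ∈ range (n - i + r), per n w (i + 1 + t) := by
      unfold NN
      rw [e2, Finset.sum_range_add]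
    -- first lap part, peeling off the m = 0 term
    obtain ⟨d, hd⟩ : ∃ d, n - i = d + 1 := ⟨n - i - 1, by omega⟩
    have hfirst : ∑ m ∈ range (n - i), ∏ t ∈ range m, per n w (i + 1 + t)
        = (∑ j ∈ Icc (i+1) (n - 1), ∏ k ∈ Icc (i+1) j, Yc w k) + 1 := by
      rw [hd, Finset.sum_range_succ']
      simp only [prod_range_zero]
      congr 1
      rw [sum_Icc_reindex, show n - 1 + 1 - (i+1) = d from by omega]
      refine sum_congr rfl fun j hj => ?_
      simp only [mem_range] at hj
      rw [prod_Icc_reindex, show i + 1 + j + 1 - (i+1) = j + 1 from by omega]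
      refine prod_congr rfl fun t ht => ?_
      simp only [mem_range] at ht
      rw [Yc_eq w (by omega), per_eq hn0 (by omega) (by omega)]
    have hsecond : ∑ r ∈ range i, ∏ t ∈ range (n - i + r), per n w (i + 1 + t)
        = (∏ k ∈ Icc (i+1) n, Yc w k) * ∑ r ∈ range i, ∏ s ∈ range r, w (s + 1) := by
      rw [Finset.mul_sum]
      refine sum_congr rfl fun r hr => ?_
      simp only [mem_range] at hr
      have := tail (i+1) r (by omega) (by omega) (by omega)
      rw [show n + 1 - (i+1) = n - i from by omega] at this
      rw [this, hIccProd (i+1) (by omega)]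
      rw [show n + 1 - (i+1) = n - i from by omega]
    -- the extra term: Q * (w 1 ⋯ w i) = PP
    have hPPsplit : (∏ k ∈ Icc (i+1) n, Yc w k) * ∏ s ∈ range i, w (s + 1)
        = PP n w := by
      have hPP2 : PP n w = (∏ s ∈ range i, w (s+1)) * ∏ t ∈ range (n - i), w (i+1+t) := by
        unfold PP
        rw [prod_Icc_reindex, show n + 1 - 1 = i + (n - i) from by omega,
          Finset.prod_range_add]
        congr 1
        · exact prod_congr rfl fun s _ => by rw [Nat.add_comm 1 s]
        · exact prod_congr rfl fun t _ => by rw [show 1 + (i + t) = i + 1 + t from by omega]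
      rw [hIccProd (i+1) (by omega), show n + 1 - (i+1) = n - i from by omega,
        hPP2, mul_comm]
    have hYsum : ∑ j ∈ range (i + 1), ∏ k ∈ range (j + 1), Yc w k
        = (∑ r ∈ range i, ∏ s ∈ range r, w (s + 1)) + ∏ s ∈ range i, w (s + 1) := by
      rw [Finset.sum_range_succ]
      congr 1
      · exact sum_congr rfl fun j _ => YcProd w j
      · exact YcProd w i
    rw [hsplit, hfirst, hsecond, hYsum, mul_add, hPPsplit]
    ring
  rw [Ymap, if_neg (by omega), hnum, hden]

lemma Ymap_formula (hn : 2 ≤ n) (w : ℕ → ℝ) {i : ℕ} (h1 : 1 ≤ i) (h2 : i ≤ n) :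
    Ymap n w i = NN n w i / (NN n w (i+1) + PP n w - 1) := by
  rcases eq_or_lt_of_le h2 with rfl | h
  · exact formula_n hn w
  · exact formula_lt hn w h1 h

/-- the fundamental recurrence in subtracted form -/
lemma rel (hn : 0 < n) (j : ℕ) :
    per n y j * NN n y (j+1) = NN n y j + PP n y - 1 := by
  have := NN_rec (y := y) hn j
  linarith

lemma zper (hn : 2 ≤ n) (j : ℕ) :
    per n (Ymap n y) j = NN n y j / (NN n y (j+1) + PP n y - 1) := by
  have hn0 : 0 < n := by omega
  set k := if j % n = 0 then n else j % n with hk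
  have hk1 : 1 ≤ k := by unfold k; split <;> omega
  have hk2 : k ≤ n := by
    unfold k; split
    · omega
    · exact le_of_lt (Nat.mod_lt _ hn0)
  have hkm : k % n = j % n := by
    unfold k; split
    · next h => rw [Nat.mod_self, h]
    · exact Nat.mod_eq_of_lt (Nat.mod_lt _ hn0)
  have hper : per n (Ymap n y) j = Ymap n y k := by
    rw [hk, apply_ite (Ymap n y)]; rfl
  rw [hper, Ymap_formula hn y hk1 hk2, NN_congr_mod hkm,
    NN_congr_mod (show (k+1) % n = (j+1) % n by rw [Nat.add_mod k 1, Nat.add_mod j 1, hkm])]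

lemma prod_zper (hn : 2 ≤ n) (hy : ∀ i, 1 ≤ i → i ≤ n → 0 < y i) (i : ℕ) :
    ∀ m, ∏ t ∈ range m, per n (Ymap n y) (i + t)
      = NN n y i * NN n y (i+1) /
        ((∏ t ∈ range m, per n y (i + 1 + t)) * (NN n y (i+m) * NN n y (i+m+1))) := by
  have hn0 : 0 < n := by omega
  have hN : ∀ j, NN n y j ≠ 0 := fun j => (NN_pos hn0 hy j).ne'
  have hp : ∀ j, per n y j ≠ 0 := fun j => (per_pos hn0 hy j).ne'
  intro m
  induction m with
  | zero =>
    simp only [prod_range_zero, one_mul]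
    rw [show i + 0 = i from rfl, div_self (mul_ne_zero (hN i) (hN (i+1)))]
  | succ m ih =>
    rw [Finset.prod_range_succ, ih, Finset.prod_range_succ,
      zper hn (i+m), ← rel hn0 (i+m+1)]
    have hW : (0:ℝ) < ∏ t ∈ range m, per n y (i + 1 + t) :=
      prod_pos fun t _ => per_pos hn0 hy _
    rw [show i + 1 + m = i + m + 1 from by omega]
    rw [show i + (m+1) = i + m + 1 from rfl, show i + m + 1 + 1 = i + m + 2 from rfl,
      show i + m + 1 + 1 = i + m + 2 from rfl]
    field_simp [hp, hN, hW.ne']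

lemma alg {A W p c d Q : ℝ} (hW : W ≠ 0) (hp : p ≠ 0) (hc : c ≠ 0) (hd : d ≠ 0)
    (h : p * d = c + Q) :
    A/(W*c) - Q*(A/((W*p)*(c*d))) = A/((W*p)*d) := by
  field_simp
  linear_combination A * h

lemma claimA (hn : 2 ≤ n) (hy : ∀ i, 1 ≤ i → i ≤ n → 0 < y i) (i : ℕ) :
    ∀ r, 1 ≤ r →
      NN n y i + PP n y - 1 -
        (PP n y - 1) * ∑ m ∈ range r, ∏ t ∈ range m, per n (Ymap n y) (i + t)
      = NN n y i * NN n y (i+1) /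
          ((∏ t ∈ range (r-1), per n y (i+1+t)) * NN n y (i+r)) := by
  have hn0 : 0 < n := by omega
  have hN : ∀ j, NN n y j ≠ 0 := fun j => (NN_pos hn0 hy j).ne'
  have hp : ∀ j, per n y j ≠ 0 := fun j => (per_pos hn0 hy j).ne'
  intro r hr
  induction r with
  | zero => omega
  | succ r ih =>
    rcases Nat.eq_or_lt_of_le hr with h1 | h1
    · -- r = 0
      obtain rfl : r = 0 := by omega
      rw [Finset.sum_range_one]
      simp only [prod_range_zero, mul_one, one_mul, Nat.zero_add, Nat.add_zero,
        show (1:ℕ) - 1 = 0 from rfl]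
      rw [eq_div_iff (hN (i+1))]
      ring
    · have hr1 : 1 ≤ r := by omega
      have IH := ih hr1
      rw [Finset.sum_range_succ, mul_add, prod_zper hn hy i r]
      have hsub : NN n y i + PP n y - 1 -
          ((PP n y - 1) * ∑ m ∈ range r, ∏ t ∈ range m, per n (Ymap n y) (i + t) +
            (PP n y - 1) * (NN n y i * NN n y (i+1) /
              ((∏ t ∈ range r, per n y (i + 1 + t)) * (NN n y (i+r) * NN n y (i+r+1)))))
          = NN n y i * NN n y (i+1) /
              ((∏ t ∈ range (r-1), per n y (i+1+t)) * NN n y (i+r)) -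
            (PP n y - 1) * (NN n y i * NN n y (i+1) /
              ((∏ t ∈ range r, per n y (i + 1 + t)) * (NN n y (i+r) * NN n y (i+r+1)))) := by
        rw [← IH]; ring
      rw [hsub]
      obtain ⟨s, rfl⟩ : ∃ s, r = s + 1 := ⟨r - 1, by omega⟩
      simp only [show s + 1 - 1 = s from rfl, show s + 1 + 1 - 1 = s + 1 from rfl,
        show i + (s+1) = i + s + 1 from rfl, show i + (s+1) + 1 = i + s + 1 + 1 from rfl]
      rw [Finset.prod_range_succ (fun t => per n y (i + 1 + t)) s]
      simp only [show i + 1 + s = i + s + 1 from by omega]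
      exact alg (prod_pos (fun t _ => per_pos hn0 hy (i + 1 + t))).ne'
        (hp _) (hN _) (hN _) (by linear_combination rel hn0 (i + s + 1))

lemma PP_pos (hy : ∀ i, 1 ≤ i → i ≤ n → 0 < y i) : 0 < PP n y :=
  prod_pos fun k hk => hy k (mem_Icc.mp hk).1 (mem_Icc.mp hk).2

lemma Mform (hn : 2 ≤ n) (hy : ∀ i, 1 ≤ i → i ≤ n → 0 < y i)
    (hP : PP n y ≠ 1) (j : ℕ) :
    NN n (Ymap n y) j = (NN n y j + PP n y - 1) / PP n y := by
  have hn0 : 0 < n := by omega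
  have hN : ∀ j, NN n y j ≠ 0 := fun j => (NN_pos hn0 hy j).ne'
  have hPP : 0 < PP n y := PP_pos hy
  have hA := claimA hn hy j n (by omega)
  rw [NN_add] at hA
  have hWp : (∏ t ∈ range (n-1), per n y (j+1+t)) * per n y j = PP n y := by
    obtain ⟨m, rfl⟩ : ∃ m, n = m + 1 := ⟨n-1, by omega⟩
    have h := prod_per (y := y) hn0 (j+1)
    rw [Finset.prod_range_succ] at h
    rw [show j + 1 + m = j + (m+1) from by omega, per_add] at h
    rw [show m + 1 - 1 = m from rfl]
    exact h
  have hW : (0:ℝ) < ∏ t ∈ range (n-1), per n y (j+1+t) :=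
    prod_pos fun t _ => per_pos hn0 hy _
  have hRHS : NN n y j * NN n y (j+1) /
      ((∏ t ∈ range (n-1), per n y (j+1+t)) * NN n y j)
      = (NN n y j + PP n y - 1) / PP n y := by
    rw [← rel hn0 j, div_eq_div_iff (mul_pos hW (NN_pos hn0 hy j)).ne' hPP.ne']
    linear_combination (-(NN n y j * NN n y (j+1))) * hWp
  rw [hRHS] at hA
  have hMgoal : NN n (Ymap n y) j
      = ∑ m ∈ range n, ∏ t ∈ range m, per n (Ymap n y) (j + t) := rfl
  rw [← hMgoal] at hA
  have hP1 : PP n y - 1 ≠ 0 := sub_ne_zero_of_ne hP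
  have e : (NN n y j + PP n y - 1) - (NN n y j + PP n y - 1)/PP n y
      = (PP n y - 1) * ((NN n y j + PP n y - 1)/PP n y) := by
    field_simp
  have h3 : (PP n y - 1) * NN n (Ymap n y) j
      = (PP n y - 1) * ((NN n y j + PP n y - 1)/PP n y) := by linarith
  exact mul_left_cancel₀ hP1 h3

lemma PPz (hn : 2 ≤ n) (hy : ∀ i, 1 ≤ i → i ≤ n → 0 < y i) :
    PP n (Ymap n y) = 1 / PP n y := by
  have hn0 : 0 < n := by omega
  have hN : ∀ j, NN n y j ≠ 0 := fun j => (NN_pos hn0 hy j).ne'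
  have hPP : 0 < PP n y := PP_pos hy
  have h1 : PP n (Ymap n y) = ∏ t ∈ range n, per n (Ymap n y) (1+t) := by
    unfold PP
    rw [prod_Icc_reindex, show n + 1 - 1 = n from rfl]
    refine prod_congr rfl fun t ht => ?_
    simp only [mem_range] at ht
    exact (per_eq hn0 (by omega) (by omega)).symm
  rw [h1, prod_zper hn hy 1 n]
  simp only [show (1:ℕ)+1 = 2 from rfl]
  rw [prod_per hn0 2, NN_add, show (1:ℕ)+n+1 = 2+n from by omega,
    NN_add]
  rw [div_eq_div_iff
    (mul_pos hPP (mul_pos (NN_pos hn0 hy 1) (NN_pos hn0 hy 2))).ne' hPP.ne']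
  ring
end YInv

/-- the map `Y = (Y_1, …, Y_n)` is an involution: `Y(Y(y)) = y` for all
positive `y_1, …, y_n`. -/
theorem Ymap_involution (n : ℕ) (hn : 2 ≤ n) (y : ℕ → ℝ)
    (hy : ∀ i, 1 ≤ i → i ≤ n → 0 < y i) :
    ∀ i, 1 ≤ i → i ≤ n → Ymap n (Ymap n y) i = y i := by
  open YInv in
  intro i h1 h2
  have hn0 : 0 < n := by omega
  have hN : ∀ j, NN n y j ≠ 0 := fun j => (YInv.NN_pos hn0 hy j).ne'
  have hPP : 0 < PP n y := YInv.PP_pos hy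
  by_cases hP : PP n y = 1
  · -- in this case Y(y) = y on [1, n]
    have hzy : ∀ k, 1 ≤ k → k ≤ n → Ymap n y k = y k := by
      intro k hk1 hk2
      have hr : NN n y k = y k * NN n y (k+1) := by
        have h := YInv.rel (y := y) hn0 k
        rw [hP, YInv.per_eq hn0 hk1 hk2] at h
        linarith
      rw [YInv.Ymap_formula hn y hk1 hk2, hP]
      rw [show NN n y (k+1) + 1 - 1 = NN n y (k+1) from by ring]
      rw [hr, mul_div_assoc, div_self (hN (k+1)), mul_one]
    have hperz : per n (Ymap n y) = per n y := funext fun j => by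
      unfold YInv.per
      split
      · exact hzy n hn0 le_rfl
      · exact hzy _ (by omega) (le_of_lt (Nat.mod_lt _ hn0))
    have hNNz : ∀ j, NN n (Ymap n y) j = NN n y j := fun j => by
      unfold YInv.NN; rw [hperz]
    have hPPz : PP n (Ymap n y) = PP n y :=
      Finset.prod_congr rfl fun k hk =>
        hzy k (Finset.mem_Icc.mp hk).1 (Finset.mem_Icc.mp hk).2
    rw [YInv.Ymap_formula hn (Ymap n y) h1 h2, hNNz, hNNz, hPPz,
      ← YInv.Ymap_formula hn y h1 h2]
    exact hzy i h1 h2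
  · have hM := YInv.Mform hn hy hP
    rw [YInv.Ymap_formula hn (Ymap n y) h1 h2, hM i, hM (i+1), YInv.PPz hn hy]
    have hden : (NN n y (i+1) + PP n y - 1)/PP n y + 1/PP n y - 1
        = NN n y (i+1)/PP n y := by
      field_simp
      ring
    rw [hden, div_div_div_cancel_right₀, ← YInv.rel (y := y) hn0 i,
      mul_div_assoc, div_self (hN (i+1)), mul_one]
    exact YInv.per_eq hn0 h1 h2
    exact hPP.ne'
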